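/- arXiv:1406.3597 — 6 statements merged into one kernel-verified Lean document; each statement's English description precedes it below -/
import Mathlib

section
/- For a positive integer n ≥ 2, let x = (n − H_n)/(H_n − 1) and α(l) = (n + x)·H_l − l·H_n. Then for every integer l with 1 ≤ l ≤ n, α(l) ≥ n + x − H_n. -/
open MeasureTheory Finset Filter

noncomputable def harmonicR (n : ℕ) : ℝ := ∑ i ∈ Finset.range n, (1 : ℝ) / (i + 1)

noncomputable def Hext (k : ℝ) : ℝ := ∫ x in (0:ℝ)..1, (1 - x ^ k) / (1 - x)

lemma harm_succ (m : ℕ) : harmonicR (m + 1) = harmonicR m + 1 / (m + 1) := by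
  simp [harmonicR, Finset.sum_range_succ]

lemma harm_one : harmonicR 1 = 1 := by simp [harmonicR]

lemma harm_ge_one : ∀ m : ℕ, 1 ≤ m → (1 : ℝ) ≤ harmonicR m := by
  intro m hm
  induction m with
  | zero => omega
  | succ k ih =>
    rcases Nat.eq_or_lt_of_le hm with h | h
    · simp [← h, harm_one]
    · have hk : 1 ≤ k := by omega
      have := ih hk
      have hpos : (0:ℝ) < 1 / ((k:ℝ) + 1) := by positivity
      rw [harm_succ]; linarith

lemma harm_A : ∀ l : ℕ, 1 ≤ l → ((l : ℝ) - 1) ≤ (l : ℝ) * (harmonicR l - 1) := by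
  intro l hl
  induction l with
  | zero => omega
  | succ k ih =>
    rcases Nat.eq_or_lt_of_le hl with h | h
    · simp [← h, harm_one]
    · have hk : 1 ≤ k := by omega
      have ihk := ih hk
      have hge := harm_ge_one k hk
      have hkpos : (0:ℝ) < (k:ℝ) + 1 := by positivity
      rw [harm_succ]
      push_cast
      have : ((k:ℝ) + 1) * (1 / ((k:ℝ)+1)) = 1 := by field_simp
      nlinarith [hge, ihk]

lemma harm_mono2 : ∀ n : ℕ, 2 ≤ n → harmonicR 2 ≤ harmonicR n := by
  intro n hn
  induction n, hn using Nat.le_induction with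
  | base => exact le_rfl
  | succ m hm ih =>
    have hpos : (0:ℝ) < 1 / ((m:ℝ) + 1) := by positivity
    rw [harm_succ m]; linarith

lemma harm_B : ∀ l n : ℕ, 1 ≤ l → l ≤ n →
    ((l : ℝ) - 1) * (harmonicR n - 1) ≤ ((n : ℝ) - 1) * (harmonicR l - 1) := by
  intro l n hl hln
  induction n, hln using Nat.le_induction with
  | base => exact le_rfl
  | succ m hm ih =>
    have ihm := ih
    have hA := harm_A l hl
    have hge := harm_ge_one l hl
    have hmpos : (0:ℝ) < (m:ℝ) + 1 := by positivity
    have hlm : (l:ℝ) ≤ (m:ℝ) + 1 := by exact_mod_cast Nat.le_succ_of_le hm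
    rw [harm_succ]
    push_cast
    have hfrac : ((l:ℝ) - 1) * (1 / ((m:ℝ)+1)) ≤ harmonicR l - 1 := by
      rw [mul_one_div, div_le_iff₀ hmpos]
      nlinarith [hA, hge]
    nlinarith [ihm, hfrac]

theorem stmt4 (n : ℕ) (hn : 2 ≤ n)
    (x : ℝ) (hx : x = ((n : ℝ) - harmonicR n) / (harmonicR n - 1))
    (α : ℕ → ℝ) (hα : ∀ m, α m = ((n : ℝ) + x) * harmonicR m - (m : ℝ) * harmonicR n) :
    ∀ l : ℕ, 1 ≤ l → l ≤ n → (n : ℝ) + x - harmonicR n ≤ α l := by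
  intro l hl hln
  set H := harmonicR n with hH
  have hH1 : 1 < H := by
    have h2 : harmonicR 2 = 1 + 1/2 := by
      rw [show (2:ℕ) = 1 + 1 from rfl, harm_succ, harm_one]; norm_num
    have : harmonicR 2 ≤ harmonicR n := harm_mono2 n hn
    rw [h2] at this; linarith
  have ht : (0:ℝ) < H - 1 := by linarith
  have hH0 : (0:ℝ) < H := by linarith
  have hsum : (n : ℝ) + x = ((n:ℝ) - 1) * H / (H - 1) := by
    rw [hx]; field_simp; ring
  have key := harm_B l n hl hln
  have hge := harm_ge_one l hl
  have hnum : (0:ℝ) ≤ ((n:ℝ) - 1) * H * (harmonicR l - 1) - ((l:ℝ) - 1) * H * (H - 1) := by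
    nlinarith [mul_le_mul_of_nonneg_left key hH0.le]
  have heq : ((n:ℝ)-1)*H/(H-1) * harmonicR l - (l:ℝ)*H - (((n:ℝ)-1)*H/(H-1) - H)
      = (((n:ℝ)-1)*H*(harmonicR l - 1) - ((l:ℝ)-1)*H*(H-1)) / (H-1) := by
    field_simp; ring
  have hdiv : (0:ℝ) ≤ (((n:ℝ)-1)*H*(harmonicR l - 1) - ((l:ℝ)-1)*H*(H-1)) / (H-1) :=
    div_nonneg hnum ht.le
  rw [hα l, hsum]
  linarith [heq ▸ hdiv]
end

section
/- For an even positive integer n, the maximum of θ(l) = l·H_{n−l} + (n−l)·H_l over integers 0 ≤ l ≤ n is n·H_{n/2}, attained at l = n/2. -/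
open MeasureTheory Finset Filter

lemma harmR_succ (m : ℕ) : harmonicR (m+1) = harmonicR m + 1/((m:ℝ)+1) := by
  simp [harmonicR, Finset.sum_range_succ]

lemma harmR_mono {a b : ℕ} (h : a ≤ b) : harmonicR a ≤ harmonicR b := by
  apply Finset.sum_le_sum_of_subset_of_nonneg
  · exact Finset.range_subset_range.2 h
  · intro i _ _; positivity

lemma stepR (a b : ℕ) (hab : a ≤ b) :
    (a:ℝ)*harmonicR (b+1) + ((b:ℝ)+1)*harmonicR a ≤
    ((a:ℝ)+1)*harmonicR b + (b:ℝ)*harmonicR (a+1) := by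
  rw [harmR_succ b, harmR_succ a]
  have h1 : harmonicR a ≤ harmonicR b := harmR_mono hab
  have hab' : (a:ℝ) ≤ b := by exact_mod_cast hab
  have ha : (0:ℝ) < (a:ℝ)+1 := by positivity
  have hb : (0:ℝ) < (b:ℝ)+1 := by positivity
  have h2 : (a:ℝ)/((b:ℝ)+1) ≤ (b:ℝ)/((a:ℝ)+1) := by
    rw [div_le_div_iff₀ hb ha]
    nlinarith
  have e1 : (a:ℝ)*(harmonicR b + 1/((b:ℝ)+1)) = (a:ℝ)*harmonicR b + (a:ℝ)/((b:ℝ)+1) := by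
    ring
  have e2 : (b:ℝ)*(harmonicR a + 1/((a:ℝ)+1)) = (b:ℝ)*harmonicR a + (b:ℝ)/((a:ℝ)+1) := by
    ring
  rw [e1, e2]
  nlinarith [h1, h2]

lemma mainR (k : ℕ) : ∀ d a b : ℕ, a + b = 2*k → b = a + d →
    (a:ℝ)*harmonicR b + (b:ℝ)*harmonicR a ≤ (2*(k:ℝ)) * harmonicR k := by
  intro d
  induction d using Nat.strong_induction_on with
  | _ d ih =>
    intro a b h1 h2
    match d, ih with
    | 0, ih =>
      have : a = k := by omega
      have hb : b = k := by omega
      subst this; subst hb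
      apply le_of_eq; ring
    | 1, ih => omega
    | (d+2), ih =>
      have hb : b = a + d + 2 := by omega
      have hab : a ≤ a + d + 1 := by omega
      have hstep := stepR a (a+d+1) hab
      have hrec := ih d (by omega) (a+1) (a+d+1) (by omega) (by omega)
      have hcast : ((a+d+1 : ℕ):ℝ) = (a:ℝ) + d + 1 := by push_cast; ring
      have hcast2 : ((a+1 : ℕ):ℝ) = (a:ℝ) + 1 := by push_cast; ring
      rw [hcast, hcast2] at hrec
      subst hb
      have hcast3 : ((a+d+2 : ℕ):ℝ) = (a:ℝ) + d + 2 := by push_cast; ring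
      rw [hcast3]
      have : a + d + 2 = (a + d + 1) + 1 := by omega
      rw [this]
      calc (a:ℝ)*harmonicR (a+d+1+1) + ((a:ℝ)+d+2)*harmonicR a
          = (a:ℝ)*harmonicR ((a+d+1)+1) + (((a+d+1:ℕ):ℝ)+1)*harmonicR a := by
            rw [hcast]; ring_nf
        _ ≤ ((a:ℝ)+1)*harmonicR (a+d+1) + ((a+d+1:ℕ):ℝ)*harmonicR (a+1) := hstep
        _ ≤ (2*(k:ℝ)) * harmonicR k := by
            rw [hcast] at *
            convert hrec using 2 <;> ring_nf

theorem stmt7 (n : ℕ) (hn : 0 < n) (he : Even n)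
    (θ : ℕ → ℝ) (hθ : ∀ m, m ≤ n → θ m = (m : ℝ) * harmonicR (n - m) + ((n : ℝ) - (m : ℝ)) * harmonicR m) :
    θ (n / 2) = (n : ℝ) * harmonicR (n / 2) ∧
    ∀ l : ℕ, l ≤ n → θ l ≤ (n : ℝ) * harmonicR (n / 2) := by
  have h2k : 2 * (n / 2) = n := by
    obtain ⟨m, hm⟩ := he; omega
  set k := n / 2 with hk
  constructor
  · have hkn : k ≤ n := by omega
    rw [hθ k hkn]
    have hsub : n - k = k := by omega
    rw [hsub]
    have hc : ((n:ℝ) - (k:ℝ)) = (k:ℝ) := by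
      have : (n:ℝ) = 2 * (k:ℝ) := by exact_mod_cast h2k.symm
      linarith
    rw [hc]
    have : (n:ℝ) = 2 * (k:ℝ) := by exact_mod_cast h2k.symm
    rw [this]; ring
  · intro l hl
    rw [hθ l hl]
    have hcast : ((n:ℝ) - (l:ℝ)) = ((n - l : ℕ):ℝ) := by
      push_cast [Nat.cast_sub hl]; ring
    have hn2k : (n:ℝ) = 2 * (k:ℝ) := by exact_mod_cast h2k.symm
    rw [hcast, hn2k]
    by_cases hcase : l ≤ k
    · have := mainR k (n - 2*l) l (n - l) (by omega) (by omega)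
      linarith
    · have := mainR k (2*l - n) (n - l) l (by omega) (by omega)
      linarith
end

section
/- For every positive integer n and every integer 1 ≤ l ≤ n, l·H_{n−l} + (n−l)·H_l ≤ n·H(n/2), where H is the extended harmonic function H(k) = ∫₀¹ (1 − x^k)/(1 − x) dx. -/
open MeasureTheory Finset Filter

lemma harmonicR_eq_integral (m : ℕ) :
    harmonicR m = ∫ x in (0:ℝ)..1, ∑ i ∈ Finset.range m, x ^ i := by
  rw [intervalIntegral.integral_finset_sum (fun i _ => (continuous_pow i).intervalIntegrable 0 1)]
  simp [harmonicR, integral_pow]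

lemma Hext_integrand_intervalIntegrable {c : ℝ} (hc : 0 < c) :
    IntervalIntegrable (fun x : ℝ => (1 - x ^ c) / (1 - x)) volume 0 1 := by
  rw [intervalIntegrable_iff, Set.uIoc_of_le zero_le_one]
  apply Measure.integrableOn_of_bounded (M := max 1 c)
  · simp
  · exact ((continuous_const.sub (Real.continuous_rpow_const hc.le)).measurable.div
      ((continuous_const.sub continuous_id).measurable)).aestronglyMeasurable
  · filter_upwards [ae_restrict_mem measurableSet_Ioc] with x hx
    rcases eq_or_lt_of_le hx.2 with h1 | h1
    · simp [h1, Real.one_rpow]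
    · have hx0 : 0 < x := hx.1
      have hx1 : (0:ℝ) < 1 - x := by linarith
      rw [Real.norm_eq_abs, abs_of_nonneg (by
        apply div_nonneg _ hx1.le
        have := Real.rpow_le_one hx0.le h1.le hc.le
        linarith)]
      rw [div_le_iff₀ hx1]
      rcases le_total c 1 with hc1 | hc1
      · have := Real.rpow_le_rpow_of_exponent_ge hx0 h1.le hc1
        rw [Real.rpow_one] at this
        have h2 : (1:ℝ) ≤ max 1 c := le_max_left _ _
        nlinarith
      · have hb := one_add_mul_self_le_rpow_one_add (s := x - 1) (by linarith) hc1
        have : (1 + (x - 1)) = x := by ring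
        rw [this] at hb
        have h2 : c ≤ max 1 c := le_max_right _ _
        nlinarith

theorem stmt8 (n : ℕ) (hn : 0 < n) (l : ℕ) (hl : 1 ≤ l) (hln : l ≤ n) :
    (l : ℝ) * harmonicR (n - l) + ((n : ℝ) - (l : ℝ)) * harmonicR l ≤ (n : ℝ) * Hext ((n : ℝ) / 2) := by
  set m : ℕ := n - l with hm
  have hnm : (m : ℝ) = (n : ℝ) - (l : ℝ) := by
    rw [hm, Nat.cast_sub hln]
  set c : ℝ := (n : ℝ) / 2 with hc
  have hcpos : 0 < c := by positivity
  have hn0 : (0:ℝ) < (n : ℝ) := by exact_mod_cast hn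
  -- integrands
  set f : ℝ → ℝ := fun x => (l : ℝ) * ∑ i ∈ Finset.range m, x ^ i
      + (m : ℝ) * ∑ i ∈ Finset.range l, x ^ i with hf
  set g : ℝ → ℝ := fun x => (n : ℝ) * ((1 - x ^ c) / (1 - x)) with hg
  have hfc : Continuous f := by fun_prop
  have hfi : IntervalIntegrable f volume 0 1 := hfc.intervalIntegrable 0 1
  have hgi : IntervalIntegrable g volume 0 1 :=
    (Hext_integrand_intervalIntegrable hcpos).const_mul _
  have hLHS : (l : ℝ) * harmonicR m + ((n : ℝ) - (l : ℝ)) * harmonicR l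
      = ∫ x in (0:ℝ)..1, f x := by
    rw [← hnm, harmonicR_eq_integral, harmonicR_eq_integral, hf]
    rw [intervalIntegral.integral_add (f := fun x => (l : ℝ) * ∑ i ∈ Finset.range m, x ^ i)
      (g := fun x => (m : ℝ) * ∑ i ∈ Finset.range l, x ^ i)
      ((continuous_const.mul (continuous_finset_sum _ fun i _ => continuous_pow i)).intervalIntegrable 0 1)
      ((continuous_const.mul (continuous_finset_sum _ fun i _ => continuous_pow i)).intervalIntegrable 0 1),
      intervalIntegral.integral_const_mul, intervalIntegral.integral_const_mul]
  have hRHS : (n : ℝ) * Hext c = ∫ x in (0:ℝ)..1, g x := by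
    rw [Hext, hg, intervalIntegral.integral_const_mul]
  rw [hLHS, hRHS]
  apply intervalIntegral.integral_mono_ae_restrict zero_le_one hfi hgi
  have h0 : ∀ᵐ x : ℝ ∂(volume.restrict (Set.Icc (0:ℝ) 1)), x ≠ 0 := by
    refine ae_restrict_of_ae ?_
    refine ae_iff.2 ?_
    simp
  have h1 : ∀ᵐ x : ℝ ∂(volume.restrict (Set.Icc (0:ℝ) 1)), x ≠ 1 := by
    refine ae_restrict_of_ae ?_
    refine ae_iff.2 ?_
    simp
  filter_upwards [ae_restrict_mem measurableSet_Icc, h0, h1] with x hx hx0 hx1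
  have hx0' : 0 < x := lt_of_le_of_ne hx.1 (Ne.symm hx0)
  have hx1' : x < 1 := lt_of_le_of_ne hx.2 hx1
  have h1x : (0:ℝ) < 1 - x := by linarith
  -- key pointwise inequality
  have hgeom : ∀ k : ℕ, (∑ i ∈ Finset.range k, x ^ i) * (1 - x) = 1 - x ^ k := by
    intro k
    have := geom_sum_mul x k
    nlinarith [this]
  have hkey : (n : ℝ) * x ^ c ≤ (l : ℝ) * x ^ (m : ℕ) + (m : ℝ) * x ^ (l : ℕ) := by
    have hlm : (l : ℝ) + (m : ℝ) = (n : ℝ) := by rw [hnm]; ring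
    have hexp : 2 * (l : ℝ) * (m : ℝ) / (n : ℝ) ≤ c := by
      rw [hc, div_le_div_iff₀ hn0 (by norm_num : (0:ℝ) < 2)]
      nlinarith [sq_nonneg ((l:ℝ) - (m:ℝ))]
    have step1 : x ^ c ≤ x ^ (2 * (l : ℝ) * (m : ℝ) / (n : ℝ)) :=
      Real.rpow_le_rpow_of_exponent_ge hx0' hx1'.le hexp
    have step2 : x ^ (2 * (l : ℝ) * (m : ℝ) / (n : ℝ))
        = (x ^ ((m : ℕ) : ℝ)) ^ ((l : ℝ) / (n : ℝ)) * (x ^ ((l : ℕ) : ℝ)) ^ ((m : ℝ) / (n : ℝ)) := by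
      rw [← Real.rpow_mul hx0'.le, ← Real.rpow_mul hx0'.le, ← Real.rpow_add hx0']
      ring_nf
    have step3 : (x ^ ((m : ℕ) : ℝ)) ^ ((l : ℝ) / (n : ℝ)) * (x ^ ((l : ℕ) : ℝ)) ^ ((m : ℝ) / (n : ℝ))
        ≤ ((l : ℝ) / (n : ℝ)) * x ^ ((m : ℕ) : ℝ) + ((m : ℝ) / (n : ℝ)) * x ^ ((l : ℕ) : ℝ) := by
      apply Real.geom_mean_le_arith_mean2_weighted (by positivity) (by positivity)
        (Real.rpow_nonneg hx0'.le _) (Real.rpow_nonneg hx0'.le _)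
      field_simp
      linarith
    have hall : x ^ c ≤ ((l : ℝ) / (n : ℝ)) * x ^ ((m : ℕ) : ℝ) + ((m : ℝ) / (n : ℝ)) * x ^ ((l : ℕ) : ℝ) := by
      calc x ^ c ≤ _ := step1
        _ = _ := step2
        _ ≤ _ := step3
    rw [Real.rpow_natCast, Real.rpow_natCast] at hall
    have := mul_le_mul_of_nonneg_left hall hn0.le
    calc (n : ℝ) * x ^ c ≤ (n : ℝ) * (((l : ℝ) / (n : ℝ)) * x ^ (m : ℕ) + ((m : ℝ) / (n : ℝ)) * x ^ (l : ℕ)) := this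
      _ = (l : ℝ) * x ^ (m : ℕ) + (m : ℝ) * x ^ (l : ℕ) := by field_simp
  -- conclude
  show (l : ℝ) * ∑ i ∈ Finset.range m, x ^ i + (m : ℝ) * ∑ i ∈ Finset.range l, x ^ i
      ≤ (n : ℝ) * ((1 - x ^ c) / (1 - x))
  rw [mul_div_assoc', le_div_iff₀ h1x]
  have e1 := hgeom m
  have e2 := hgeom l
  have hlm : (l : ℝ) + (m : ℝ) = (n : ℝ) := by rw [hnm]; ring
  have hxc1 : x ^ c ≤ 1 := Real.rpow_le_one hx0'.le hx1'.le hcpos.le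
  nlinarith [hkey, e1, e2]
end

section
/- For a positive integer n ≥ 2 and x ≥ 0, and for every integer 1 ≤ l ≤ n, β(l) = l·H_{n−l} + ((n+x) − l)·H_l satisfies β(l) ≤ (n+x)·H((n+x)/2), where H is the increasing extension of harmonic numbers to the reals. -/
open MeasureTheory Finset Filter

lemma integrand_bound {k : ℝ} (hk : 0 ≤ k) {x : ℝ} (hx : x ∈ Set.Ioc (0:ℝ) 1) :
    ‖(1 - x ^ k) / (1 - x)‖ ≤ max 1 k := by
  obtain ⟨hx0, hx1⟩ := hx
  rcases eq_or_lt_of_le hx1 with rfl | hx1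
  · simp
  have h1x : 0 < 1 - x := by linarith
  have hxk : x ^ k ≤ 1 := Real.rpow_le_one hx0.le hx1.le hk
  have hnum : 0 ≤ 1 - x ^ k := by linarith
  rw [Real.norm_eq_abs, abs_of_nonneg (div_nonneg hnum h1x.le)]
  rcases le_total k 1 with hk1 | hk1
  · refine le_trans ?_ (le_max_left 1 k)
    rw [div_le_one h1x]
    have : x ^ (1:ℝ) ≤ x ^ k := Real.rpow_le_rpow_of_exponent_ge hx0 hx1.le hk1
    rw [Real.rpow_one] at this
    linarith
  · refine le_trans ?_ (le_max_right 1 k)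
    rw [div_le_iff₀ h1x]
    have := one_add_mul_self_le_rpow_one_add (by linarith : -1 ≤ x - 1) hk1
    have hx' : (1 : ℝ) + (x - 1) = x := by ring
    rw [hx'] at this
    nlinarith

lemma integrand_intble {k : ℝ} (hk : 0 ≤ k) :
    IntervalIntegrable (fun x => (1 - x ^ k) / (1 - x)) volume 0 1 := by
  rw [intervalIntegrable_iff, Set.uIoc_of_le (by norm_num : (0:ℝ) ≤ 1)]
  apply Measure.integrableOn_of_bounded (M := max 1 k) measure_Ioc_lt_top.ne
  · apply Measurable.aestronglyMeasurable
    exact (measurable_const.sub (measurable_id.pow_const k)).div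
      (measurable_const.sub measurable_id)
  · rw [ae_restrict_iff' measurableSet_Ioc]
    filter_upwards with y hy using integrand_bound hk hy

lemma Hext_natCast (m : ℕ) : Hext (m : ℝ) = harmonicR m := by
  unfold Hext harmonicR
  have hcongr : (∫ x in (0:ℝ)..1, (1 - x ^ (m:ℝ)) / (1 - x)) =
      ∫ x in (0:ℝ)..1, ∑ i ∈ Finset.range m, x ^ i := by
    apply intervalIntegral.integral_congr_ae
    have h1 : ∀ᵐ x : ℝ ∂(volume : Measure ℝ), x ≠ 1 := by
      rw [ae_iff]
      simpa using measure_singleton (1:ℝ)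
    filter_upwards [h1] with y hy1 hy
    rw [Set.uIoc_of_le (by norm_num : (0:ℝ) ≤ 1)] at hy
    have hy0 : 0 < y := hy.1
    rw [Real.rpow_natCast, geom_sum_eq hy1,
      div_eq_div_iff (by intro h; apply hy1; linarith) (by intro h; apply hy1; linarith)]
    ring
  rw [hcongr, intervalIntegral.integral_finset_sum]
  · refine Finset.sum_congr rfl fun i _ => ?_
    rw [integral_pow]
    norm_num
  · exact fun i _ => (continuous_pow i).intervalIntegrable 0 1

theorem stmt9 (n : ℕ) (hn : 2 ≤ n) (x : ℝ) (hx : 0 ≤ x) (l : ℕ) (hl : 1 ≤ l) (hln : l ≤ n) :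
    (l : ℝ) * harmonicR (n - l) + (((n : ℝ) + x) - (l : ℝ)) * harmonicR l ≤
      ((n : ℝ) + x) * Hext (((n : ℝ) + x) / 2) := by
  set s : ℝ := (n : ℝ) + x with hs_def
  set a : ℝ := (n : ℝ) - (l : ℝ) with ha_def
  have hl1 : (1 : ℝ) ≤ (l : ℝ) := by exact_mod_cast hl
  have hnl : (l : ℝ) ≤ (n : ℝ) := by exact_mod_cast hln
  have hn2 : (2 : ℝ) ≤ (n : ℝ) := by exact_mod_cast hn
  have hns : (n : ℝ) ≤ s := by simp [hs_def]; linarith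
  have hs0 : 0 < s := by linarith
  have ha0 : 0 ≤ a := by simp [ha_def]; linarith
  have hl0 : (0 : ℝ) ≤ (l : ℝ) := by linarith
  have hsl : (l : ℝ) ≤ s := by linarith
  have hHa : harmonicR (n - l) = Hext a := by
    rw [← Hext_natCast]
    congr 1
    push_cast [Nat.cast_sub hln]
    rfl
  have hHl : harmonicR l = Hext (l : ℝ) := (Hext_natCast l).symm
  rw [hHa, hHl]
  unfold Hext
  have Ia := integrand_intble ha0
  have Il := integrand_intble (by linarith : (0:ℝ) ≤ (l:ℝ))
  have Is := integrand_intble (by linarith : (0:ℝ) ≤ s / 2)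
  rw [← intervalIntegral.integral_const_mul, ← intervalIntegral.integral_const_mul,
    ← intervalIntegral.integral_const_mul, ← intervalIntegral.integral_add
      (Ia.const_mul _) (Il.const_mul _)]
  apply intervalIntegral.integral_mono_on (by norm_num) ((Ia.const_mul _).add (Il.const_mul _))
    (Is.const_mul _)
  intro y hy
  obtain ⟨hy0, hy1⟩ := hy
  rcases eq_or_lt_of_le hy1 with rfl | hy1
  · simp
  rcases eq_or_lt_of_le hy0 with rfl | hy0
  · have hl' : ((l:ℝ)) ≠ 0 := by linarith
    have hs' : s / 2 ≠ 0 := by positivity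
    rw [Real.zero_rpow hl', Real.zero_rpow hs']
    have h0a : (0:ℝ) ≤ (0:ℝ) ^ a := Real.rpow_nonneg le_rfl a
    have h1a : (0:ℝ) ^ a ≤ 1 := Real.rpow_le_one le_rfl zero_le_one ha0
    simp only [sub_zero, div_one]
    nlinarith
  -- main case 0 < y < 1
  have h1y : 0 < 1 - y := by linarith
  -- key inequality: s * y^(s/2) ≤ l * y^a + (s-l) * y^l
  have key : s * y ^ (s / 2) ≤ (l:ℝ) * y ^ a + (s - (l:ℝ)) * y ^ (l:ℝ) := by
    have hw1 : (0:ℝ) ≤ (l:ℝ) / s := by positivity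
    have hw2 : (0:ℝ) ≤ (s - (l:ℝ)) / s := by
      apply div_nonneg _ hs0.le; linarith
    have hw : (l:ℝ) / s + (s - (l:ℝ)) / s = 1 := by field_simp; ring
    have hp1 : (0:ℝ) ≤ y ^ a := Real.rpow_nonneg hy0.le a
    have hp2 : (0:ℝ) ≤ y ^ (l:ℝ) := Real.rpow_nonneg hy0.le _
    have amgm := Real.geom_mean_le_arith_mean2_weighted hw1 hw2 hp1 hp2 hw
    rw [← Real.rpow_mul hy0.le, ← Real.rpow_mul hy0.le, ← Real.rpow_add hy0] at amgm
    have he : a * ((l:ℝ) / s) + (l:ℝ) * ((s - (l:ℝ)) / s) ≤ s / 2 := by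
      have h1 : a * ((l:ℝ) / s) + (l:ℝ) * ((s - (l:ℝ)) / s) = (a * l + l * (s - l)) / s := by
        ring
      rw [h1, div_le_div_iff₀ hs0 (by norm_num : (0:ℝ) < 2)]
      have hlsn : (0:ℝ) ≤ (l:ℝ) * (s - (n:ℝ)) := mul_nonneg hl0 (by linarith)
      nlinarith [sq_nonneg (s - 2 * (l:ℝ))]
    have hmono : y ^ (s / 2) ≤ y ^ (a * ((l:ℝ) / s) + (l:ℝ) * ((s - (l:ℝ)) / s)) :=
      Real.rpow_le_rpow_of_exponent_ge hy0 hy1.le he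
    have : s * y ^ (s / 2) ≤ s * ((l:ℝ) / s * y ^ a + (s - (l:ℝ)) / s * y ^ (l:ℝ)) := by
      apply mul_le_mul_of_nonneg_left (le_trans hmono amgm) hs0.le
    calc s * y ^ (s / 2) ≤ s * ((l:ℝ) / s * y ^ a + (s - (l:ℝ)) / s * y ^ (l:ℝ)) := this
      _ = (l:ℝ) * y ^ a + (s - (l:ℝ)) * y ^ (l:ℝ) := by field_simp
  have e1 : (l:ℝ) * ((1 - y ^ a) / (1 - y)) + (s - (l:ℝ)) * ((1 - y ^ (l:ℝ)) / (1 - y))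
      = ((l:ℝ) * (1 - y ^ a) + (s - (l:ℝ)) * (1 - y ^ (l:ℝ))) / (1 - y) := by ring
  have e2 : s * ((1 - y ^ (s / 2)) / (1 - y)) = (s * (1 - y ^ (s / 2))) / (1 - y) := by ring
  rw [e1, e2, div_le_div_iff₀ h1y h1y]
  nlinarith [key]
end

section
/- With x_n = (n − H_n)/(H_n − 1), the quantity (n + x_n)/(n + x_n − H_n) · H((n + x_n)/2) tends to have difference from H(n/2) going to 0 as n → ∞; formally, for every ε > 0 there exists n(ε) such that for all n ≥ n(ε), (n + x_n)/(n + x_n − H_n) · H((n + x_n)/2) ≤ H(n/2) + ε. -/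
set_option maxHeartbeats 1000000
open MeasureTheory Finset Filter

lemma harmonicR_eq (n : ℕ) : harmonicR n = (harmonic n : ℝ) := by
  simp only [harmonicR, harmonic, Rat.cast_sum, Rat.cast_inv, Rat.cast_natCast, one_div]
  push_cast
  rfl

lemma harmonicR_le (n : ℕ) : harmonicR n ≤ 1 + Real.log n := by
  rw [harmonicR_eq]; exact harmonic_le_one_add_log n

lemma harmonicR_ge (n : ℕ) : Real.log (n+1) ≤ harmonicR n := by
  rw [harmonicR_eq]
  simpa using log_add_one_le_harmonic n

-- pointwise bounds
lemma fk_nonneg {k x : ℝ} (hk : 0 ≤ k) (hx : x ∈ Set.Icc (0:ℝ) 1) :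
    0 ≤ (1 - x ^ k) / (1 - x) := by
  rcases eq_or_lt_of_le hx.2 with h1 | h1
  · simp [← h1]
  · apply div_nonneg _ (by linarith)
    have : x ^ k ≤ 1 := Real.rpow_le_one hx.1 hx.2 hk
    linarith

lemma fk_le {k x : ℝ} (hk : 1 ≤ k) (hx : x ∈ Set.Icc (0:ℝ) 1) :
    (1 - x ^ k) / (1 - x) ≤ k := by
  rcases eq_or_lt_of_le hx.2 with h1 | h1
  · simp [← h1]; linarith
  · rw [div_le_iff₀ (by linarith)]
    have := one_add_mul_self_le_rpow_one_add (s := x - 1) (by linarith [hx.1]) hk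
    simp only [add_sub_cancel] at this
    nlinarith
open MeasureTheory Finset Filter intervalIntegral


lemma fk_meas {k : ℝ} (hk : 0 ≤ k) : Measurable (fun x : ℝ => (1 - x ^ k) / (1 - x)) := by
  apply Measurable.div
  · exact measurable_const.sub (Real.continuous_rpow_const hk).measurable
  · exact measurable_const.sub measurable_id

lemma fk_intble {k : ℝ} (hk : 1 ≤ k) :
    IntervalIntegrable (fun x : ℝ => (1 - x ^ k) / (1 - x)) volume 0 1 := by
  rw [intervalIntegrable_iff_integrableOn_Icc_of_le zero_le_one]
  apply MeasureTheory.Integrable.mono' (g := fun _ => k)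
    ((integrableOn_const_iff (C := k)).mpr (Or.inr (by simp)))
    ((fk_meas (by linarith : (0:ℝ) ≤ k)).aestronglyMeasurable.restrict)
  · filter_upwards [ae_restrict_mem measurableSet_Icc] with x hx
    rw [Real.norm_eq_abs, abs_of_nonneg (fk_nonneg (by linarith) hx)]
    exact fk_le hk hx
lemma Hext_mono {a b : ℝ} (ha : 1 ≤ a) (hb : 1 ≤ b) (hab : a ≤ b) : Hext a ≤ Hext b := by
  apply intervalIntegral.integral_mono_on zero_le_one (fk_intble ha) (fk_intble hb)
  intro x hx
  rcases eq_or_lt_of_le hx.2 with h1 | h1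
  · simp [← h1]
  rcases eq_or_lt_of_le hx.1 with h0 | h0
  · rw [← h0]
    rw [Real.zero_rpow (by linarith), Real.zero_rpow (by linarith)]
  · apply div_le_div_of_nonneg_right _ (by linarith)
    have := Real.rpow_le_rpow_of_exponent_ge h0 (le_of_lt h1) hab
    linarith

lemma Hext_incr {a b : ℝ} (ha : 1 ≤ a) (hab : a + 1 ≤ b) :
    Hext b ≤ Hext a + (b - a) / (a + 1) := by
  have key : ∫ x in (0:ℝ)..1, ((1 - x ^ a) / (1 - x) + (b - a) * x ^ a)
      = Hext a + (b - a) / (a + 1) := by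
    rw [intervalIntegral.integral_add (g := fun x => (b - a) * x ^ a) (fk_intble ha)
      ((continuous_const.mul (Real.continuous_rpow_const (by linarith))).intervalIntegrable 0 1)]
    congr 1
    rw [intervalIntegral.integral_const_mul, integral_rpow (Or.inl (by linarith))]
    rw [Real.one_rpow, Real.zero_rpow (by linarith)]
    ring
  rw [← key]
  apply intervalIntegral.integral_mono_on zero_le_one (fk_intble (by linarith))
  · exact (fk_intble ha).add
      ((continuous_const.mul (Real.continuous_rpow_const (by linarith))).intervalIntegrable 0 1)
  intro x hx
  rcases eq_or_lt_of_le hx.2 with h1 | h1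
  · subst h1
    have h2 : ((1:ℝ)-1)/(1-1) = 0 := by norm_num
    rw [Real.one_rpow, Real.one_rpow, h2]
    nlinarith
  rcases eq_or_lt_of_le hx.1 with h0 | h0
  · rw [← h0, Real.zero_rpow (by linarith), Real.zero_rpow (by linarith)]
    norm_num
  · -- 0 < x < 1
    have hxb : x ^ b = x ^ a * x ^ (b - a) := by
      rw [← Real.rpow_add h0]; ring_nf
    have hber : 1 - x ^ (b-a) ≤ (b - a) * (1 - x) := by
      have := one_add_mul_self_le_rpow_one_add (s := x - 1) (by linarith) (p := b - a) (by linarith)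
      simp only [add_sub_cancel] at this
      nlinarith
    have hxa : (0:ℝ) ≤ x ^ a := Real.rpow_nonneg (le_of_lt h0) a
    rw [div_add' _ _ _ (by linarith : 1 - x ≠ 0)]
    apply div_le_div_of_nonneg_right _ (by linarith)
    nlinarith
lemma Hext_nat (n : ℕ) : Hext (n : ℝ) = harmonicR n := by
  have heq : ∫ x in (0:ℝ)..1, (1 - x ^ (n:ℝ)) / (1 - x)
      = ∫ x in (0:ℝ)..1, (∑ i ∈ Finset.range n, x ^ i) := by
    apply intervalIntegral.integral_congr_ae
    have h1 : (volume : Measure ℝ) {(1:ℝ)} = 0 := Real.volume_singleton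
    filter_upwards [measure_eq_zero_iff_ae_notMem.mp h1] with x hx _
    have hx1 : x ≠ 1 := by simpa using hx
    rw [Real.rpow_natCast, geom_sum_eq hx1]
    rw [div_eq_div_iff (by intro h; apply hx1; linarith) (by intro h; apply hx1; linarith)]
    ring
  unfold Hext harmonicR
  rw [heq, intervalIntegral.integral_finset_sum
    (fun i _ => (continuous_pow i).intervalIntegrable 0 1)]
  apply Finset.sum_congr rfl
  intro i _
  rw [integral_pow]
  simp
lemma tendsto_harmonicR : Tendsto harmonicR atTop atTop := by
  apply tendsto_atTop_mono harmonicR_ge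
  have : Tendsto (fun n : ℕ => ((n:ℝ) + 1)) atTop atTop :=
    tendsto_atTop_add_const_right atTop 1 tendsto_natCast_atTop_atTop
  exact Real.tendsto_log_atTop.comp this

theorem stmt10 : ∀ ε : ℝ, 0 < ε → ∃ N : ℕ, ∀ n : ℕ, N ≤ n →
    (((n : ℝ) + ((n : ℝ) - harmonicR n) / (harmonicR n - 1)) /
        (((n : ℝ) + ((n : ℝ) - harmonicR n) / (harmonicR n - 1)) - harmonicR n)) *
      Hext (((n : ℝ) + ((n : ℝ) - harmonicR n) / (harmonicR n - 1)) / 2) ≤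
    Hext ((n : ℝ) / 2) + ε := by
  intro ε hε
  have e1 : ∀ᶠ n : ℕ in atTop, 2 ≤ harmonicR n := tendsto_harmonicR.eventually_ge_atTop 2
  have e2 : ∀ᶠ n : ℕ in atTop, 2/ε + 1 ≤ harmonicR n := tendsto_harmonicR.eventually_ge_atTop _
  have hlog2 : Tendsto (fun n : ℕ => Real.log n ^ 2 / n) atTop (nhds 0) := by
    have := (Real.tendsto_pow_log_div_mul_add_atTop 1 0 2 one_ne_zero).comp
      (tendsto_natCast_atTop_atTop (R := ℝ))
    simpa [Function.comp_def] using this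
  have hlog1 : Tendsto (fun n : ℕ => Real.log n / n) atTop (nhds 0) := by
    have := (Real.tendsto_pow_log_div_mul_add_atTop 1 0 1 one_ne_zero).comp
      (tendsto_natCast_atTop_atTop (R := ℝ))
    simpa [Function.comp_def] using this
  have e3 : ∀ᶠ n : ℕ in atTop, Real.log n ^ 2 / n ≤ ε/16 :=
    hlog2.eventually_le_const (by positivity)
  have e4 : ∀ᶠ n : ℕ in atTop, Real.log n / n ≤ 1/6 :=
    hlog1.eventually_le_const (by norm_num)
  have e5 : ∀ᶠ n : ℕ in atTop, (6:ℕ) ≤ n := eventually_ge_atTop 6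
  have e6 : ∀ᶠ n : ℕ in atTop, (1:ℝ) ≤ Real.log n :=
    (Real.tendsto_log_atTop.comp (tendsto_natCast_atTop_atTop (R := ℝ))).eventually_ge_atTop 1
  obtain ⟨N, hN⟩ := eventually_atTop.mp (((((e1.and e2).and e3).and e4).and e5).and e6)
  refine ⟨N, fun n hn => ?_⟩
  obtain ⟨⟨⟨⟨⟨hH2, hHε⟩, hl2⟩, hl1⟩, hn6⟩, hln⟩ := hN n hn
  set H := harmonicR n with hHdef
  have hn6' : (6:ℝ) ≤ (n:ℝ) := by exact_mod_cast hn6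
  have hH1 : (1:ℝ) < H := by linarith
  have hHle : H ≤ 1 + Real.log n := harmonicR_le n
  have hlogn : Real.log n ≤ (n:ℝ)/6 := by
    rw [div_le_iff₀ (by linarith : (0:ℝ) < (n:ℝ))] at hl1; linarith
  have h3H : 3 * H ≤ (n:ℝ) := by nlinarith
  have hnH : H < (n:ℝ) := by linarith
  set x : ℝ := ((n:ℝ) - H) / (H - 1) with hxdef
  have hH1' : (0:ℝ) < H - 1 := by linarith
  have hxmul : x * (H - 1) = (n:ℝ) - H := div_mul_cancel₀ _ (by linarith)
  have hxpos : 0 < x := div_pos (by linarith) hH1'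
  have hx2 : 2 ≤ x := by
    rw [hxdef, le_div_iff₀ hH1']; nlinarith
  have hxn : x ≤ (n:ℝ) := by
    nlinarith
  set s : ℝ := (n:ℝ) + x with hsdef
  have hsH : s - H = H * ((n:ℝ) - H) / (H - 1) := by
    rw [hsdef, hxdef]; field_simp; ring
  clear_value s
  clear_value x
  clear_value H
  have hsHpos : 0 < s - H := by
    rw [hsH]; apply div_pos (by nlinarith) hH1'
  have hratio : s / (s - H) = ((n:ℝ) - 1) / ((n:ℝ) - H) := by
    have hs : s = H * ((n:ℝ) - 1) / (H - 1) := by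
      rw [hsdef, hxdef]; field_simp; ring
    rw [hsH, hs]
    rw [div_div_div_eq]
    rw [div_eq_div_iff (mul_pos hH1' (mul_pos (by linarith : (0:ℝ) < H) (by linarith : (0:ℝ) < (n:ℝ) - H))).ne'
      (by linarith : (0:ℝ) < (n:ℝ) - H).ne']
    ring
  -- main estimates
  have ha1 : (1:ℝ) ≤ (n:ℝ)/2 := by linarith
  have hb_lb : (n:ℝ)/2 + 1 ≤ s/2 := by rw [hsdef]; linarith
  have hb_ub : s/2 ≤ (n:ℝ) := by rw [hsdef]; linarith
  have hstep1 : Hext (s/2) ≤ Hext ((n:ℝ)/2) + (s/2 - (n:ℝ)/2) / ((n:ℝ)/2 + 1) :=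
    Hext_incr ha1 hb_lb
  have hsmall : (s/2 - (n:ℝ)/2) / ((n:ℝ)/2 + 1) ≤ ε/2 := by
    have hd : s/2 - (n:ℝ)/2 = x/2 := by rw [hsdef]; ring
    rw [hd, div_le_iff₀ (by linarith : (0:ℝ) < (n:ℝ)/2 + 1)]
    have hεH : 2 ≤ (H-1)*ε := (div_le_iff₀ hε).mp (by linarith)
    nlinarith [mul_nonneg (by linarith : (0:ℝ) ≤ (n:ℝ)/2+1)
      (by linarith : (0:ℝ) ≤ (H-1)*ε - 2)]
  have hmono' : Hext (s/2) ≤ H := by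
    have h := Hext_mono (by linarith : (1:ℝ) ≤ s/2) (by linarith : (1:ℝ) ≤ (n:ℝ)) hb_ub
    rw [Hext_nat, ← hHdef] at h; exact h
  have hbig : (H - 1)/((n:ℝ) - H) * H ≤ ε/2 := by
    have hHlog : H ≤ 2*Real.log n := by linarith
    have hl2' : Real.log n ^ 2 ≤ ε/16 * n := by
      rw [div_le_iff₀ (by linarith : (0:ℝ) < (n:ℝ))] at hl2; linarith
    rw [div_mul_eq_mul_div, div_le_iff₀ (by linarith : (0:ℝ) < (n:ℝ) - H)]
    nlinarith [mul_le_mul hHlog hHlog (by linarith : (0:ℝ) ≤ H)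
      (by linarith : (0:ℝ) ≤ 2*Real.log n),
      mul_nonneg hε.le (by linarith : (0:ℝ) ≤ ((n:ℝ) - H) - 2/3*(n:ℝ))]
  rw [hratio]
  have hfact : ((n:ℝ)-1)/((n:ℝ)-H) = 1 + (H-1)/((n:ℝ)-H) := by
    have hne : (n:ℝ) - H ≠ 0 := by linarith
    field_simp
    ring
  rw [hfact, add_mul, one_mul]
  have hterm : (H-1)/((n:ℝ)-H) * Hext (s/2) ≤ (H-1)/((n:ℝ)-H) * H :=
    mul_le_mul_of_nonneg_left hmono'
      (div_nonneg (by linarith) (by linarith))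
  linarith
end

section
/- In a Shapley network design game with n players, the cost of any Nash equilibrium minimizing the potential function is at most H_n times the cost of a social optimum; consequently PoS(G) ≤ H_n. -/
open Finset

variable {n : ℕ} {E : Type*}

/-- number of players using edge e in profile P -/
def nUsers [Fintype (Fin n)] [DecidableEq E] (P : Fin n → Finset E) (e : E) : ℕ :=
  (Finset.univ.filter fun j => e ∈ P j).card

/-- edges used in profile P -/
def usedEdges [DecidableEq E] (P : Fin n → Finset E) : Finset E :=
  Finset.univ.biUnion P

/-- cost of player i -/
noncomputable def playerCost [DecidableEq E] (c : E → ℝ) (P : Fin n → Finset E) (i : Fin n) : ℝ :=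
  ∑ e ∈ P i, c e / (nUsers P e : ℝ)

/-- social cost -/
noncomputable def socialCost [DecidableEq E] (c : E → ℝ) (P : Fin n → Finset E) : ℝ :=
  ∑ e ∈ usedEdges P, c e

/-- potential function -/
noncomputable def potential [DecidableEq E] (c : E → ℝ) (P : Fin n → Finset E) : ℝ :=
  ∑ e ∈ usedEdges P, harmonicR (nUsers P e) * c e

lemma harmonicR_mono : Monotone harmonicR := fun a b hab =>
  Finset.sum_le_sum_of_subset_of_nonneg (Finset.range_subset_range.2 hab)
    (fun i _ _ => by positivity)

lemma one_le_harmonicR {k : ℕ} (hk : 1 ≤ k) : 1 ≤ harmonicR k := by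
  have := harmonicR_mono hk
  simpa [harmonicR] using this

lemma nUsers_pos_of_used [DecidableEq E] {P : Fin n → Finset E} {e : E}
    (he : e ∈ usedEdges P) : 1 ≤ nUsers P e := by
  simp only [usedEdges, Finset.mem_biUnion, Finset.mem_univ, true_and] at he
  obtain ⟨j, hj⟩ := he
  exact Finset.card_pos.2 ⟨j, by simp [hj]⟩

lemma nUsers_le [DecidableEq E] (P : Fin n → Finset E) (e : E) : nUsers P e ≤ n := by
  simpa [nUsers] using Finset.card_filter_le (Finset.univ : Finset (Fin n)) _

theorem stmt18 (n : ℕ) (hn : 1 ≤ n) (E : Type*) [Fintype E] [DecidableEq E]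
    (c : E → ℝ) (hc : ∀ e, 0 ≤ c e)
    (S : Fin n → Set (Finset E)) (N O : Fin n → Finset E)
    (hNS : ∀ i, N i ∈ S i) (hOS : ∀ i, O i ∈ S i)
    (hmin : ∀ P : Fin n → Finset E, (∀ j, P j ∈ S j) → potential c N ≤ potential c P) :
    socialCost c N ≤ harmonicR n * socialCost c O := by
  have h1 : socialCost c N ≤ potential c N := by
    refine Finset.sum_le_sum fun e he => ?_
    have := one_le_harmonicR (nUsers_pos_of_used he)
    nlinarith [hc e]
  have h2 : potential c N ≤ potential c O := hmin O hOS
  have h3 : potential c O ≤ harmonicR n * socialCost c O := by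
    rw [socialCost, Finset.mul_sum]
    refine Finset.sum_le_sum fun e he => ?_
    have h := harmonicR_mono (nUsers_le O e)
    nlinarith [hc e]
  linarith
end
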